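/- Let r and s be integers with 2 ≤ r < s such that r−1 divides s−1, let q = (s−1)/(r−1), and let n be a positive integer divisible by q. Partition [n] into q consecutive intervals X_1 < X_2 < … < X_q, each of size n/q, and let G be the subgraph of K^{(r)}_n whose edges are exactly those r-element subsets of [n] not contained in any single part X_i. Then G contains no copy of P^{(r)}_s; consequently ex(n, P^{(r)}_s) ≥ C(n,r) − q·C(n/q, r), where C(a,b) denotes the binomial coefficient. -/

import Mathlib

open Finset
open scoped Classical

/-- Edge set of the natural tight path `P^{(r)}_s` on vertex set `[s] = {1,…,s}`:
all intervals of `r` consecutive integers. -/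
def pathEdges (r s : ℕ) : Finset (Finset ℕ) :=
  (Finset.Icc 1 (s - r + 1)).image (fun i => Finset.Icc i (i + r - 1))

/-- Edge set of the loose path `LP^{(r)}_s`: only the first and last edges. -/
def loosePathEdges (r s : ℕ) : Finset (Finset ℕ) :=
  {Finset.Icc 1 r, Finset.Icc (s - r + 1) s}

/-- `C` is the edge set of a copy in `K^{(r)}_n` of the ordered hypergraph with
vertex set `[s]` and edge set `E`, i.e. the image of `E` under a strictly
increasing map `[s] → [n]`. -/
def IsCopy (n s : ℕ) (E : Finset (Finset ℕ)) (C : Finset (Finset ℕ)) : Prop :=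
  ∃ f : ℕ → ℕ, StrictMonoOn f ↑(Finset.Icc 1 s) ∧
    (∀ v ∈ Finset.Icc 1 s, f v ∈ Finset.Icc 1 n) ∧
    C = E.image (fun e => e.image f)

/-- A transversal: a set `T` of `r`-element subsets of `[n]` meeting every copy. -/
def IsTransversal (n r s : ℕ) (E : Finset (Finset ℕ)) (T : Finset (Finset ℕ)) : Prop :=
  T ⊆ (Finset.Icc 1 n).powersetCard r ∧
  ∀ C : Finset (Finset ℕ), IsCopy n s E C → ∃ e ∈ C, e ∈ T

/-- The transversal number `τ(n,H)`. -/
noncomputable def tau (n r s : ℕ) (E : Finset (Finset ℕ)) : ℕ :=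
  sInf {m | ∃ T : Finset (Finset ℕ), IsTransversal n r s E T ∧ T.card = m}

/-- A packing: an edge-disjoint family of copies. -/
def IsPacking (n s : ℕ) (E : Finset (Finset ℕ)) (P : Finset (Finset (Finset ℕ))) : Prop :=
  (∀ C ∈ P, IsCopy n s E C) ∧
  ∀ C ∈ P, ∀ C' ∈ P, C ≠ C' → Disjoint C C'

/-- The packing number `ν(n,H)`. -/
noncomputable def nu (n s : ℕ) (E : Finset (Finset ℕ)) : ℕ :=
  sSup {m | ∃ P : Finset (Finset (Finset ℕ)), IsPacking n s E P ∧ P.card = m}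

/-- The ordered Turán number: maximum number of edges of a subgraph of
`K^{(r)}_n` containing no copy of the hypergraph with edge set `E`. -/
noncomputable def exNum (n r s : ℕ) (E : Finset (Finset ℕ)) : ℕ :=
  sSup {m | ∃ G ⊆ (Finset.Icc 1 n).powersetCard r,
    (∀ C : Finset (Finset ℕ), IsCopy n s E C → ¬ C ⊆ G) ∧ G.card = m}

/-- `S ⊆ [n]` is `m`-left-biased. -/
def LeftBiased (n m : ℕ) (S : Finset ℕ) : Prop :=
  ∃ u ≤ n / 2, (S ∩ Finset.Icc 1 u).card = m ∧ S ∩ Finset.Icc (n + 1 - u) n = ∅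

/-- `h(n,t,m)`: the number of `m`-left-biased `t`-element subsets of `[n]`. -/
noncomputable def hcount (n t m : ℕ) : ℕ :=
  (((Finset.Icc 1 n).powersetCard t).filter (LeftBiased n m)).card

/-- A fractional transversal. -/
def IsFracTransversal (n r s : ℕ) (E : Finset (Finset ℕ)) (w : Finset ℕ → ℝ) : Prop :=
  (∀ e ∈ (Finset.Icc 1 n).powersetCard r, 0 ≤ w e) ∧
  ∀ C : Finset (Finset ℕ), IsCopy n s E C → 1 ≤ ∑ e ∈ C, w e

/-- The fractional transversal number `τ*(n,H)`. -/
noncomputable def tauStar (n r s : ℕ) (E : Finset (Finset ℕ)) : ℝ :=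
  sInf {x : ℝ | ∃ w : Finset ℕ → ℝ, IsFracTransversal n r s E w ∧
    x = ∑ e ∈ (Finset.Icc 1 n).powersetCard r, w e}

/-- A `k`-edge-labeling of the ordered complete graph on `[n]`. -/
def IsLabeling (n k : ℕ) (φ : ℕ → ℕ → ℕ) : Prop :=
  ∀ u v : ℕ, u ∈ Finset.Icc 1 n → v ∈ Finset.Icc 1 n → u < v → φ u v ∈ Finset.Icc 1 k

/-- The number of good triples `u < v < w` in `[n]` (those with `φ(uv) < φ(vw)`). -/
def goodCount (n : ℕ) (φ : ℕ → ℕ → ℕ) : ℕ :=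
  (((Finset.Icc 1 n) ×ˢ (Finset.Icc 1 n) ×ˢ (Finset.Icc 1 n)).filter
    (fun p => p.1 < p.2.1 ∧ p.2.1 < p.2.2 ∧ φ p.1 p.2.1 < φ p.2.1 p.2.2)).card

/-- The number of bad triples `u < v < w` in `[n]` (those with `φ(uv) ≥ φ(vw)`). -/
def badCount (n : ℕ) (φ : ℕ → ℕ → ℕ) : ℕ :=
  (((Finset.Icc 1 n) ×ˢ (Finset.Icc 1 n) ×ˢ (Finset.Icc 1 n)).filter
    (fun p => p.1 < p.2.1 ∧ p.2.1 < p.2.2 ∧ ¬ φ p.1 p.2.1 < φ p.2.1 p.2.2)).card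

/-- `f(n,k)`: the maximum number of good triples over all `k`-edge-labelings of `[n]`. -/
noncomputable def fmax (n k : ℕ) : ℕ :=
  sSup {m | ∃ φ : ℕ → ℕ → ℕ, IsLabeling n k φ ∧ goodCount n φ = m}

/-- A labeling is monotone if `φ(uv) ≤ φ(vw)` whenever `u < v < w` in `[n]`. -/
def IsMonotone (n : ℕ) (φ : ℕ → ℕ → ℕ) : Prop :=
  ∀ u v w : ℕ, u ∈ Finset.Icc 1 n → v ∈ Finset.Icc 1 n → w ∈ Finset.Icc 1 n →
    u < v → v < w → φ u v ≤ φ v w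

/-- `Φ_L(v) = max{φ(uv) : u < v}`, with `Φ_L(1) = 0`. -/
def PhiL (φ : ℕ → ℕ → ℕ) (v : ℕ) : ℕ := (Finset.Ico 1 v).sup (fun u => φ u v)

/-- `Φ_R(v) = min{φ(vw) : v < w ≤ n}`, with `Φ_R(n) = k+1`. -/
noncomputable def PhiR (n k : ℕ) (φ : ℕ → ℕ → ℕ) (v : ℕ) : ℕ :=
  if v = n then k + 1 else sInf {m | ∃ w ∈ Finset.Ioc v n, φ v w = m}

/-- `X_i = {v ∈ [n] : Φ_L(v) = i}`. -/
def XL (n : ℕ) (φ : ℕ → ℕ → ℕ) (i : ℕ) : Finset ℕ :=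
  (Finset.Icc 1 n).filter (fun v => PhiL φ v = i)

/-- `X̂_i = {v ∈ [n] : Φ_R(v) = i}`. -/
noncomputable def XR (n k : ℕ) (φ : ℕ → ℕ → ℕ) (i : ℕ) : Finset ℕ :=
  (Finset.Icc 1 n).filter (fun v => PhiR n k φ v = i)

/-- If `2 ≤ r < s`, `(r-1) ∣ (s-1)`, `q = (s-1)/(r-1)` and `q ∣ n` with `n > 0`,
then the subgraph of `K^{(r)}_n` whose edges are the `r`-sets not contained in any of the `q`
consecutive intervals of length `n/q` contains no copy of `P^{(r)}_s`; consequently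
`ex(n, P^{(r)}_s) ≥ C(n,r) - q·C(n/q, r)`. -/
lemma idx_bounds (b v n q i : ℕ) (hb : 0 < b) (hn : n = q * b) (hv1 : 1 ≤ v)
    (hvn : v ≤ n) (hi : i = (v - 1) / b + 1) :
    (i - 1) * b + 1 ≤ v ∧ v ≤ i * b ∧ 1 ≤ i ∧ i ≤ q := by
  subst hi
  set d := (v - 1) / b with hd
  set m := (v - 1) % b with hm
  have h1 : d * b ≤ v - 1 := by rw [hd]; exact Nat.div_mul_le_self _ _
  have h2 : b * d + m = v - 1 := by rw [hd, hm]; exact Nat.div_add_mod _ _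
  have h3 : m < b := by rw [hm]; exact Nat.mod_lt _ hb
  clear_value d m
  have h4 : (d + 1) * b = d * b + b := by ring
  have h5 : b * d = d * b := by ring
  have h6 : (d + 1 - 1) * b = d * b := by congr 1
  refine ⟨by omega, by omega, by omega, ?_⟩
  have hlt : d * b < q * b := by omega
  have := Nat.lt_of_mul_lt_mul_right hlt
  omega

theorem stmt9 (r s q n : ℕ) (hr : 2 ≤ r) (hrs : r < s) (hdvd : (r - 1) ∣ (s - 1))
    (hq : q = (s - 1) / (r - 1)) (hn : 0 < n) (hqn : q ∣ n) :
    (∀ C : Finset (Finset ℕ), IsCopy n s (pathEdges r s) C →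
      ¬ C ⊆ ((Finset.Icc 1 n).powersetCard r).filter
        (fun e => ∀ i ∈ Finset.Icc 1 q, ¬ e ⊆ Finset.Icc ((i - 1) * (n / q) + 1) (i * (n / q)))) ∧
    n.choose r - q * (n / q).choose r ≤ exNum n r s (pathEdges r s) := by
  set b := n / q with hbdef
  set r1 := r - 1 with hr1
  have hs : s = q * r1 + 1 := by
    have := Nat.div_mul_cancel hdvd
    rw [← hq] at this
    omega
  have hq1 : 1 ≤ q := by
    rcases Nat.eq_zero_or_pos q with h | h
    · rw [h] at hs; omega
    · exact h
  have hnqb : n = q * b := by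
    rw [hbdef]; exact (Nat.div_mul_cancel hqn).symm.trans (mul_comm _ _)
  have hb : 0 < b := by
    rcases Nat.eq_zero_or_pos b with h | h
    · rw [h, mul_zero] at hnqb; omega
    · exact h
  -- Part 1
  have part1 : ∀ C : Finset (Finset ℕ), IsCopy n s (pathEdges r s) C →
      ¬ C ⊆ ((Finset.Icc 1 n).powersetCard r).filter
        (fun e => ∀ i ∈ Finset.Icc 1 q, ¬ e ⊆ Finset.Icc ((i - 1) * b + 1) (i * b)) := by
    intro C hcopy hsub
    obtain ⟨f, hmono, hrange, hC⟩ := hcopy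
    have chain : ∀ j, j ≤ q → j + 1 ≤ (f (1 + j * r1) - 1) / b + 1 := by
      intro j
      induction j with
      | zero => exact fun _ => Nat.succ_le_succ (Nat.zero_le _)
      | succ j ih =>
        intro hjq
        have hih := ih (by omega)
        set a := 1 + j * r1 with ha
        have hc' : 1 + (j + 1) * r1 = a + r1 := by rw [ha]; ring
        rw [hc']
        set c := a + r1 with hcdef
        have hmul : (j + 1) * r1 ≤ q * r1 := Nat.mul_le_mul_right _ (by omega)
        have hmul2 : (j + 1) * r1 = j * r1 + r1 := by ring
        have hcs : c ≤ s := by omega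
        have hamem : a ∈ Finset.Icc 1 s := by rw [Finset.mem_Icc]; omega
        have hcmem : c ∈ Finset.Icc 1 s := by rw [Finset.mem_Icc]; omega
        have hedge_path : Finset.Icc a (a + r - 1) ∈ pathEdges r s := by
          unfold pathEdges
          apply Finset.mem_image_of_mem
          rw [Finset.mem_Icc]; omega
        have hedge : (Finset.Icc a (a + r - 1)).image f ∈ C := by
          rw [hC]; exact Finset.mem_image_of_mem _ hedge_path
        have hedgeG := hsub hedge
        rw [Finset.mem_filter] at hedgeG
        have hfa := hrange a hamem
        have hfc := hrange c hcmem
        rw [Finset.mem_Icc] at hfa hfc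
        have hfalt : f a < f c := hmono hamem hcmem (by omega)
        have hba := idx_bounds b (f a) n q ((f a - 1) / b + 1) hb hnqb hfa.1 hfa.2 rfl
        -- idx (f a) ≠ idx (f c)
        have hne : (f a - 1) / b + 1 ≠ (f c - 1) / b + 1 := by
          intro heq
          have hbc := idx_bounds b (f c) n q ((f a - 1) / b + 1) hb hnqb hfc.1 hfc.2 heq
          refine hedgeG.2 ((f a - 1) / b + 1)
            (by rw [Finset.mem_Icc]; exact ⟨hba.2.2.1, hba.2.2.2⟩) ?_
          intro x hx
          rw [Finset.mem_image] at hx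
          obtain ⟨u, hu, hxu⟩ := hx
          rw [Finset.mem_Icc] at hu
          have hac : a + r - 1 = c := by omega
          have humem : u ∈ Finset.Icc 1 s := by rw [Finset.mem_Icc]; omega
          have h1 : f a ≤ f u := hmono.monotoneOn hamem humem hu.1
          have h2 : f u ≤ f c := hmono.monotoneOn humem hcmem (by omega)
          rw [Finset.mem_Icc]
          exact ⟨le_trans hba.1 (hxu ▸ h1), le_trans (hxu ▸ h2) hbc.2.1⟩
        have hmono2 : (f a - 1) / b ≤ (f c - 1) / b := Nat.div_le_div_right (by omega)
        set da := (f a - 1) / b with hda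
        set dc := (f c - 1) / b with hdc
        clear_value da dc
        omega
    have hfin := chain q le_rfl
    have hfs := hrange s (by rw [Finset.mem_Icc]; omega)
    rw [Finset.mem_Icc] at hfs
    have heq : 1 + q * r1 = s := by omega
    rw [heq] at hfin
    have hfin2 := (idx_bounds b (f s) n q ((f s - 1) / b + 1) hb hnqb hfs.1 hfs.2 rfl).2.2.2
    set ds := (f s - 1) / b with hds
    clear_value ds
    omega
  refine ⟨part1, ?_⟩
  -- Part 2: cardinality
  set A := (Finset.Icc 1 n).powersetCard r with hA
  set G := A.filter
      (fun e => ∀ i ∈ Finset.Icc 1 q, ¬ e ⊆ Finset.Icc ((i - 1) * b + 1) (i * b)) with hG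
  have hAcard : A.card = n.choose r := by
    rw [hA, Finset.card_powersetCard, Nat.card_Icc]
    simp
  have hXsub : ∀ i ∈ Finset.Icc 1 q, Finset.Icc ((i - 1) * b + 1) (i * b) ⊆ Finset.Icc 1 n := by
    intro i hi
    rw [Finset.mem_Icc] at hi
    apply Finset.Icc_subset_Icc (by omega)
    calc i * b ≤ q * b := Nat.mul_le_mul_right _ hi.2
    _ = n := hnqb.symm
  have hbad : A.filter (fun e => ∃ i ∈ Finset.Icc 1 q, e ⊆ Finset.Icc ((i - 1) * b + 1) (i * b))
      = (Finset.Icc 1 q).biUnion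
        (fun i => (Finset.Icc ((i - 1) * b + 1) (i * b)).powersetCard r) := by
    ext e
    simp only [Finset.mem_filter, Finset.mem_biUnion, Finset.mem_powersetCard, hA]
    constructor
    · rintro ⟨⟨hsub, hcard⟩, i, hi, hie⟩
      exact ⟨i, hi, hie, hcard⟩
    · rintro ⟨i, hi, hie, hcard⟩
      exact ⟨⟨hie.trans (hXsub i hi), hcard⟩, i, hi, hie⟩
  have hbadcard : (A.filter (fun e => ∃ i ∈ Finset.Icc 1 q,
      e ⊆ Finset.Icc ((i - 1) * b + 1) (i * b))).card = q * b.choose r := by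
    rw [hbad, Finset.card_biUnion]
    · have : ∀ i ∈ Finset.Icc 1 q,
          ((Finset.Icc ((i - 1) * b + 1) (i * b)).powersetCard r).card = b.choose r := by
        intro i hi
        rw [Finset.mem_Icc] at hi
        rw [Finset.card_powersetCard, Nat.card_Icc]
        have hib : i * b = (i - 1) * b + b := by
          have h8 : (i - 1 + 1) * b = (i - 1) * b + b := by ring
          have h9 : i - 1 + 1 = i := by omega
          rw [← h8, h9]
        congr 1
        omega
      rw [Finset.sum_congr rfl this, Finset.sum_const, Nat.card_Icc, smul_eq_mul]
      congr 1
    · intro i hi j hj hij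
      rw [Finset.mem_coe, Finset.mem_Icc] at hi hj
      rw [Function.onFun, Finset.disjoint_left]
      intro e he1 he2
      rw [Finset.mem_powersetCard] at he1 he2
      have hne : e.Nonempty := by
        rw [← Finset.card_pos, he1.2]; omega
      obtain ⟨x, hx⟩ := hne
      have h1 := he1.1 hx
      have h2 := he2.1 hx
      rw [Finset.mem_Icc] at h1 h2
      rcases Nat.lt_or_ge i j with h | h
      · have : i * b ≤ (j - 1) * b := Nat.mul_le_mul_right _ (by omega)
        omega
      · have h' : j < i := by omega
        have : j * b ≤ (i - 1) * b := Nat.mul_le_mul_right _ (by omega)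
        omega
  have hGcard : G.card = n.choose r - q * b.choose r := by
    have hsplit := Finset.card_filter_add_card_filter_not
      (s := A) (p := fun e => ∃ i ∈ Finset.Icc 1 q, e ⊆ Finset.Icc ((i - 1) * b + 1) (i * b))
    have hGeq : G = A.filter (fun e => ¬ ∃ i ∈ Finset.Icc 1 q,
        e ⊆ Finset.Icc ((i - 1) * b + 1) (i * b)) := by
      rw [hG]
      apply Finset.filter_congr
      intro e _
      push_neg
      rfl
    rw [hGeq]
    omega
  -- conclude
  have hmem : n.choose r - q * b.choose r ∈ {m | ∃ G ⊆ (Finset.Icc 1 n).powersetCard r,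
      (∀ C : Finset (Finset ℕ), IsCopy n s (pathEdges r s) C → ¬ C ⊆ G) ∧ G.card = m} := by
    refine ⟨G, Finset.filter_subset _ _, ?_, hGcard⟩
    intro C hcopy
    exact part1 C hcopy
  have hbdd : BddAbove {m | ∃ G ⊆ (Finset.Icc 1 n).powersetCard r,
      (∀ C : Finset (Finset ℕ), IsCopy n s (pathEdges r s) C → ¬ C ⊆ G) ∧ G.card = m} := by
    refine ⟨n.choose r, ?_⟩
    rintro m ⟨G', hG', _, hcard⟩
    rw [← hcard, ← hAcard]
    exact Finset.card_le_card hG'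
  exact le_csSup hbdd hmem
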